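/- Let h(x) := −4e^x(e^{2x}+3) / ((e^x−1)(e^x+3)((2e^x+e^{2x}−3)log((e^x−1)/(e^x+3)) − 4e^x x)). Then there exist constants c, c' > 0 and M > 0 such that c ≤ h(x)·x ≤ c' for all x > M. Consequently ∫_M^∞ √(h(x)) dx = ∞. -/

import Mathlib

open Real MeasureTheory

noncomputable def h8 (x : ℝ) : ℝ :=
  -4 * exp x * (exp (2 * x) + 3) /
    ((exp x - 1) * (exp x + 3) *
      ((2 * exp x + exp (2 * x) - 3) * Real.log ((exp x - 1) / (exp x + 3)) - 4 * exp x * x))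

lemma h8_bounds {x : ℝ} (hx : 2 < x) : 1/4 ≤ h8 x * x ∧ h8 x * x ≤ 2 := by
  set t := exp x with ht_def
  have hx0 : (0:ℝ) < x := by linarith
  have ht3 : 3 < t := by
    have := add_one_le_exp (2 : ℝ)
    have : (3:ℝ) ≤ exp 2 := by linarith
    have hlt : exp 2 < exp x := exp_lt_exp.mpr hx
    linarith
  have ht1 : (0:ℝ) < t - 1 := by linarith
  have ht3' : (0:ℝ) < t + 3 := by linarith
  have ht0 : (0:ℝ) < t := by linarith
  set L : ℝ := Real.log ((t + 3) / (t - 1)) with hL_def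
  have hLub : L ≤ 4 / (t - 1) := by
    have h := Real.log_le_sub_one_of_pos (x := (t + 3) / (t - 1)) (by positivity)
    have : (t + 3) / (t - 1) - 1 = 4 / (t - 1) := by field_simp; ring
    linarith [this ▸ h]
  have hLlb : 4 / (t + 3) ≤ L := by
    have h := Real.log_le_sub_one_of_pos (x := (t - 1) / (t + 3)) (by positivity)
    have heq : Real.log ((t - 1) / (t + 3)) = -L := by
      rw [hL_def, Real.log_div (by linarith) (by linarith), Real.log_div (by linarith) (by linarith)]
      ring
    have h2 : (t - 1) / (t + 3) - 1 = -(4 / (t + 3)) := by field_simp; ring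
    rw [heq, h2] at h
    linarith
  have hlog_eq : Real.log ((t - 1) / (t + 3)) = -L := by
    rw [hL_def, Real.log_div (by linarith) (by linarith), Real.log_div (by linarith) (by linarith)]
    ring
  have h2x : exp (2 * x) = t ^ 2 := by
    rw [two_mul, exp_add]; ring
  set E : ℝ := 4 * t * x + (t - 1) * (t + 3) * L with hE_def
  have hElb : 4 * t * x + 4 * (t - 1) ≤ E := by
    have h1 : 4 * (t - 1) ≤ (t - 1) * (t + 3) * L := by
      have := mul_le_mul_of_nonneg_left hLlb (by positivity : (0:ℝ) ≤ (t - 1) * (t + 3))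
      calc 4 * (t - 1) = (t - 1) * (t + 3) * (4 / (t + 3)) := by field_simp
        _ ≤ (t - 1) * (t + 3) * L := this
    linarith
  have hEub : E ≤ 4 * t * x + 4 * (t + 3) := by
    have h1 : (t - 1) * (t + 3) * L ≤ 4 * (t + 3) := by
      have := mul_le_mul_of_nonneg_left hLub (by positivity : (0:ℝ) ≤ (t - 1) * (t + 3))
      calc (t - 1) * (t + 3) * L ≤ (t - 1) * (t + 3) * (4 / (t - 1)) := this
        _ = 4 * (t + 3) := by field_simp
    linarith
  have hE0 : 0 < E := by nlinarith
  have hform : h8 x = 4 * t * (t ^ 2 + 3) / ((t - 1) * (t + 3) * E) := by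
    rw [h8, ← ht_def, h2x, hlog_eq]
    rw [show (t - 1) * (t + 3) * ((2 * t + t ^ 2 - 3) * -L - 4 * t * x)
        = -((t - 1) * (t + 3) * E) by rw [hE_def]; ring]
    rw [show -4 * t * (t ^ 2 + 3) = -(4 * t * (t ^ 2 + 3)) by ring, neg_div_neg_eq]
  have hden0 : (0:ℝ) < (t - 1) * (t + 3) * E := by positivity
  constructor
  · rw [hform, div_mul_eq_mul_div, le_div_iff₀ hden0]
    have hp : (0:ℝ) ≤ t - 3 := by linarith
    have hq : (0:ℝ) ≤ x - 2 := by linarith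
    have key : (t - 1) * (t + 3) * (4 * t * x + 4 * (t + 3)) ≤ 16 * (t * (t ^ 2 + 3)) * x := by
      nlinarith [mul_nonneg (mul_nonneg (mul_nonneg hp hq) ht0.le) ht0.le,
        mul_nonneg (mul_nonneg hp ht0.le) ht0.le, mul_nonneg (mul_nonneg hq ht0.le) ht0.le,
        mul_nonneg hp hq, mul_nonneg hp ht0.le, mul_nonneg hq ht0.le, sq_nonneg t]
    have h2 : (t - 1) * (t + 3) * E ≤ (t - 1) * (t + 3) * (4 * t * x + 4 * (t + 3)) :=
      mul_le_mul_of_nonneg_left hEub (by positivity)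
    nlinarith
  · rw [hform, div_mul_eq_mul_div, div_le_iff₀ hden0]
    nlinarith [mul_pos ht0 hx0, sq_nonneg t]

lemma sqrt_h8_lb {x : ℝ} (hx : 5 < x) : x⁻¹ ≤ Real.sqrt (h8 x) := by
  have hx0 : (0:ℝ) < x := by linarith
  have hb := (h8_bounds (by linarith : (2:ℝ) < x)).1
  have hh8 : (4 * x)⁻¹ ≤ h8 x := by
    rw [inv_le_iff_one_le_mul₀ (by positivity)]
    calc (1:ℝ) = 4 * (1/4) := by norm_num
      _ ≤ 4 * (h8 x * x) := by linarith
      _ = h8 x * (4 * x) := by ring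
  have h1 : Real.sqrt ((4 * x)⁻¹) ≤ Real.sqrt (h8 x) := Real.sqrt_le_sqrt hh8
  have h2 : Real.sqrt ((4 * x)⁻¹) = (2 * Real.sqrt x)⁻¹ := by
    rw [Real.sqrt_inv, Real.sqrt_mul (by norm_num : (0:ℝ) ≤ 4),
      show Real.sqrt 4 = 2 by
        rw [show (4:ℝ) = 2 ^ 2 by norm_num, Real.sqrt_sq (by norm_num : (0:ℝ) ≤ 2)]]
  have hsx : (2:ℝ) ≤ Real.sqrt x := by
    rw [show (2:ℝ) = Real.sqrt 4 by
      rw [show (4:ℝ) = 2 ^ 2 by norm_num, Real.sqrt_sq (by norm_num : (0:ℝ) ≤ 2)]]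
    exact Real.sqrt_le_sqrt (by linarith)
  have hsx0 : 0 < Real.sqrt x := by linarith
  have h3 : x⁻¹ ≤ (2 * Real.sqrt x)⁻¹ := by
    apply inv_anti₀ (by positivity)
    nlinarith [Real.mul_self_sqrt hx0.le]
  linarith [h2 ▸ h1]

theorem figure8_WP_complete_at_infinity :
    ∃ c c' M : ℝ, 0 < c ∧ 0 < c' ∧ 0 < M ∧
      (∀ x, M < x → c ≤ h8 x * x ∧ h8 x * x ≤ c') ∧
      ∫⁻ x in Set.Ioi M, ENNReal.ofReal (Real.sqrt (h8 x)) = ⊤ := by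
  refine ⟨1/4, 2, 5, by norm_num, by norm_num, by norm_num,
    fun x hx => h8_bounds (by linarith), ?_⟩
  -- the comparison function x ↦ x ^ (-1 : ℝ) is not integrable on Ioi 5
  have hnotint : ¬ IntegrableOn (fun x : ℝ => x ^ (-1 : ℝ)) (Set.Ioi 5) volume := by
    rw [integrableOn_Ioi_rpow_iff (by norm_num : (0:ℝ) < 5)]
    norm_num
  have hmeas : Measurable fun x : ℝ => x ^ (-1 : ℝ) := by
    simp only [Real.rpow_neg_one]; exact measurable_inv
  have htop : ∫⁻ x in Set.Ioi (5:ℝ), ENNReal.ofReal (x ^ (-1 : ℝ)) = ⊤ := by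
    by_contra h
    apply hnotint
    refine ⟨hmeas.aestronglyMeasurable, ?_⟩
    rw [hasFiniteIntegral_iff_ofReal]
    · exact lt_top_iff_ne_top.mpr h
    · filter_upwards [ae_restrict_mem measurableSet_Ioi] with a ha
      rw [Real.rpow_neg_one]
      have : (5:ℝ) < a := ha
      positivity
  rw [eq_top_iff, ← htop]
  apply setLIntegral_mono' measurableSet_Ioi
  intro x hx
  apply ENNReal.ofReal_le_ofReal
  rw [Real.rpow_neg_one]
  exact sqrt_h8_lb hx
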